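/- Let k ≥ 1, let x₁, …, x_k be i.i.d. random variables with distribution P, let y₁, …, y_k be i.i.d. random variables with distribution Q, with (x₁, …, x_k, y₁, …, y_k) mutually independent, and let g be a measurable function of a pair such that g(x, y) is square-integrable for x ∼ P and y ∼ Q independent. Let U = (1/k²)·Σ_{i=1}^k Σ_{j=1}^k g(x_i, y_j) and V = (1/k)·Σ_{i=1}^k g(x_i, y_i). Then E[U] = E[V] = E[g(x, y)] for independent x ∼ P, y ∼ Q (both estimators are unbiased), and Var[U] ≤ Var[V]. -/

import Mathlib

open MeasureTheory ProbabilityTheory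
open scoped ENNReal

section AuxUStat
variable {α β : Type*} [MeasurableSpace α] [MeasurableSpace β]

private lemma ustat_l2mul {μ : Measure α} {f g : α → ℝ} (hf : MemLp f 2 μ)
    (hg : MemLp g 2 μ) : Integrable (fun a => f a * g a) μ := by
  have hpqr : (1 : ℝ≥0∞) / 1 = 1 / 2 + 1 / 2 := by rw [ENNReal.add_halves, div_one]
  have h : MemLp (g • f) 1 μ := hf.smul hg
  exact (memLp_one_iff_integrable.mp h).congr
    (Filter.Eventually.of_forall fun a => by simp [mul_comm])

private lemma ustat_sum_ite_const {k : ℕ} (j : Fin k) (a b : ℝ) :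
    ∑ j' : Fin k, (if j = j' then a else b) = a + ((k : ℝ) - 1) * b := by
  have h : ∀ j' : Fin k, (if j = j' then a else b) = b + (if j = j' then a - b else 0) :=
    fun j' => by split <;> ring
  simp_rw [h, Finset.sum_add_distrib, Finset.sum_const, Finset.card_univ, Fintype.card_fin,
    Finset.sum_ite_eq, Finset.mem_univ, if_true, nsmul_eq_mul]
  ring

private lemma ustat_sum2 (k : ℕ) (A : ℝ) :
    ∑ i : Fin k, ∑ i' : Fin k, (if i = i' then A else 0) = (k : ℝ) * A := by
  simp_rw [ustat_sum_ite_const, mul_zero, add_zero, Finset.sum_const, Finset.card_univ,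
    Fintype.card_fin, nsmul_eq_mul]

private lemma ustat_sum4 (k : ℕ) (A B C : ℝ) :
    (∑ i : Fin k, ∑ j : Fin k, ∑ i' : Fin k, ∑ j' : Fin k,
      (if i = i' then (if j = j' then A else B) else (if j = j' then C else 0)))
    = (k : ℝ) * k * A + (k : ℝ) * k * ((k : ℝ) - 1) * B
        + (k : ℝ) * k * ((k : ℝ) - 1) * C := by
  have h1 : ∀ i i' : Fin k, ∀ j : Fin k,
      (∑ j' : Fin k, (if i = i' then (if j = j' then A else B) else (if j = j' then C else 0)))
      = if i = i' then (A + ((k : ℝ) - 1) * B) else C := by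
    intro i i' j
    by_cases h : i = i'
    · simp only [h, if_true]; exact ustat_sum_ite_const j A B
    · simp only [h, if_false]
      rw [ustat_sum_ite_const j C 0]; ring
  calc (∑ i : Fin k, ∑ j : Fin k, ∑ i' : Fin k, ∑ j' : Fin k,
      (if i = i' then (if j = j' then A else B) else (if j = j' then C else 0)))
      = ∑ i : Fin k, ∑ j : Fin k, ∑ i' : Fin k,
          (if i = i' then (A + ((k : ℝ) - 1) * B) else C) := by
        refine Finset.sum_congr rfl fun i _ => Finset.sum_congr rfl fun j _ =>
          Finset.sum_congr rfl fun i' _ => ?_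
        exact h1 i i' j
    _ = ∑ i : Fin k, ∑ j : Fin k, ((A + ((k : ℝ) - 1) * B) + ((k : ℝ) - 1) * C) := by
        refine Finset.sum_congr rfl fun i _ => Finset.sum_congr rfl fun j _ => ?_
        exact ustat_sum_ite_const i _ _
    _ = _ := by
        simp only [Finset.sum_const, Finset.card_univ, Fintype.card_fin, nsmul_eq_mul]
        ring

private lemma ustat_sq_int_le {ν : Measure β} [IsProbabilityMeasure ν] {f : β → ℝ}
    (hf : MemLp f 2 ν) : (∫ y, f y ∂ν) ^ 2 ≤ ∫ y, (f y) ^ 2 ∂ν := by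
  have h := variance_nonneg f ν
  rw [variance_eq_sub hf] at h
  simp only [Pi.pow_apply] at h
  linarith

private lemma ustat_memℒp_integral_right {P : Measure α} {Q : Measure β}
    [IsProbabilityMeasure P] [IsProbabilityMeasure Q] {f : α × β → ℝ} (hfm : Measurable f)
    (hf2 : MemLp f 2 (P.prod Q)) :
    MemLp (fun x => ∫ y, f (x, y) ∂Q) 2 P := by
  have hsm : StronglyMeasurable fun x => ∫ y, f (x, y) ∂Q :=
    hfm.stronglyMeasurable.integral_prod_right'
  rw [memLp_two_iff_integrable_sq hsm.aestronglyMeasurable]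
  have hsq : Integrable (fun p => f p ^ 2) (P.prod Q) :=
    (memLp_two_iff_integrable_sq hfm.aestronglyMeasurable).mp hf2
  refine Integrable.mono' hsq.integral_prod_left ((hsm.pow 2).aestronglyMeasurable) ?_
  filter_upwards [hsq.prod_right_ae] with x hx
  have hmx : AEStronglyMeasurable (fun y => f (x, y)) Q :=
    (hfm.comp measurable_prodMk_left).aestronglyMeasurable
  have hme : MemLp (fun y => f (x, y)) 2 Q := (memLp_two_iff_integrable_sq hmx).mpr hx
  have hle := ustat_sq_int_le hme
  rw [Real.norm_eq_abs, abs_of_nonneg (sq_nonneg _)]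
  exact hle

private lemma ustat_key_ineq {P : Measure α} {Q : Measure β} [IsProbabilityMeasure P]
    [IsProbabilityMeasure Q] {f : α × β → ℝ} (hfm : Measurable f)
    (hf2 : MemLp f 2 (P.prod Q)) (hf0 : ∫ p, f p ∂(P.prod Q) = 0) :
    (∫ x, (∫ y, f (x, y) ∂Q) ^ 2 ∂P) + (∫ y, (∫ x, f (x, y) ∂P) ^ 2 ∂Q)
      ≤ ∫ p, f p ^ 2 ∂(P.prod Q) := by
  simp_rw [pow_two]
  have hswapm : Measurable (f ∘ Prod.swap : β × α → ℝ) := hfm.comp measurable_swap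
  have hswap2 : MemLp (f ∘ Prod.swap) 2 (Q.prod P) :=
    hf2.comp_measurePreserving Measure.measurePreserving_swap
  have hm1 : StronglyMeasurable fun x => ∫ y, f (x, y) ∂Q :=
    hfm.stronglyMeasurable.integral_prod_right'
  have hm2 : StronglyMeasurable fun y => ∫ x, f (x, y) ∂P :=
    hswapm.stronglyMeasurable.integral_prod_right'
  have hh1 : MemLp (fun x => ∫ y, f (x, y) ∂Q) 2 P := ustat_memℒp_integral_right hfm hf2
  have hh2 : MemLp (fun y => ∫ x, f (x, y) ∂P) 2 Q :=
    ustat_memℒp_integral_right hswapm hswap2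
  set h1 : α → ℝ := fun x => ∫ y, f (x, y) ∂Q with hh1def
  set h2 : β → ℝ := fun y => ∫ x, f (x, y) ∂P with hh2def
  have hmapfst : (P.prod Q).map Prod.fst = P := by
    rw [Measure.map_fst_prod]; simp
  have hmapsnd : (P.prod Q).map Prod.snd = Q := by
    rw [Measure.map_snd_prod]; simp
  have mpfst : MeasurePreserving (Prod.fst) (P.prod Q) P := ⟨measurable_fst, hmapfst⟩
  have mpsnd : MeasurePreserving (Prod.snd) (P.prod Q) Q := ⟨measurable_snd, hmapsnd⟩
  have hF1 : MemLp (fun p : α × β => h1 p.1) 2 (P.prod Q) := hh1.comp_measurePreserving mpfst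
  have hF2 : MemLp (fun p : α × β => h2 p.2) 2 (P.prod Q) := hh2.comp_measurePreserving mpsnd
  have iff' : Integrable (fun p => f p * f p) (P.prod Q) := ustat_l2mul hf2 hf2
  have i11 : Integrable (fun p : α × β => h1 p.1 * h1 p.1) (P.prod Q) := ustat_l2mul hF1 hF1
  have i22 : Integrable (fun p : α × β => h2 p.2 * h2 p.2) (P.prod Q) := ustat_l2mul hF2 hF2
  have i12 : Integrable (fun p : α × β => h1 p.1 * h2 p.2) (P.prod Q) := ustat_l2mul hF1 hF2
  have if1 : Integrable (fun p : α × β => f p * h1 p.1) (P.prod Q) := ustat_l2mul hf2 hF1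
  have if2 : Integrable (fun p : α × β => f p * h2 p.2) (P.prod Q) := ustat_l2mul hf2 hF2
  have hint : Integrable f (P.prod Q) := hf2.integrable one_le_two
  have e0a : ∫ x, h1 x ∂P = 0 := by rw [← hf0, integral_prod f hint]
  have e0b : ∫ y, h2 y ∂Q = 0 := by rw [← hf0, integral_prod_symm f hint]
  have e2 : ∫ p, f p * h1 p.1 ∂(P.prod Q) = ∫ x, h1 x * h1 x ∂P := by
    rw [integral_prod _ if1]
    refine integral_congr_ae (Filter.Eventually.of_forall fun x => ?_)
    dsimp only
    rw [integral_mul_const, mul_comm]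
  have e3 : ∫ p, f p * h2 p.2 ∂(P.prod Q) = ∫ y, h2 y * h2 y ∂Q := by
    rw [integral_prod_symm _ if2]
    refine integral_congr_ae (Filter.Eventually.of_forall fun y => ?_)
    dsimp only
    rw [integral_mul_const, mul_comm]
  have e4 : ∫ p : α × β, h1 p.1 * h2 p.2 ∂(P.prod Q) = 0 := by
    rw [integral_prod_mul h1 h2, e0a, e0b, mul_zero]
  have e5 : ∫ p : α × β, h1 p.1 * h1 p.1 ∂(P.prod Q) = ∫ x, h1 x * h1 x ∂P := by
    conv_rhs => rw [← hmapfst]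
    rw [integral_map (f := fun x => h1 x * h1 x) measurable_fst.aemeasurable
      ((hm1.measurable.mul hm1.measurable).aestronglyMeasurable)]
  have e6 : ∫ p : α × β, h2 p.2 * h2 p.2 ∂(P.prod Q) = ∫ y, h2 y * h2 y ∂Q := by
    conv_rhs => rw [← hmapsnd]
    rw [integral_map (f := fun y => h2 y * h2 y) measurable_snd.aemeasurable
      ((hm2.measurable.mul hm2.measurable).aestronglyMeasurable)]
  have hexp : ∀ p : α × β, (f p - h1 p.1 - h2 p.2) * (f p - h1 p.1 - h2 p.2)
      = (f p * f p + (h1 p.1 * h1 p.1 + (h2 p.2 * h2 p.2 + 2 * (h1 p.1 * h2 p.2))))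
        - (2 * (f p * h1 p.1) + 2 * (f p * h2 p.2)) := fun p => by ring
  have hpos : (0:ℝ) ≤ ∫ p, (f p - h1 p.1 - h2 p.2) * (f p - h1 p.1 - h2 p.2) ∂(P.prod Q) :=
    integral_nonneg fun p => mul_self_nonneg _
  simp only [hexp] at hpos
  have j12 : Integrable (fun p : α × β => 2 * (h1 p.1 * h2 p.2)) (P.prod Q) := i12.const_mul 2
  have j1 : Integrable (fun p : α × β => 2 * (f p * h1 p.1)) (P.prod Q) := if1.const_mul 2
  have j2 : Integrable (fun p : α × β => 2 * (f p * h2 p.2)) (P.prod Q) := if2.const_mul 2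
  have k3 : Integrable (fun p : α × β =>
      h2 p.2 * h2 p.2 + 2 * (h1 p.1 * h2 p.2)) (P.prod Q) := i22.add j12
  have k2 : Integrable (fun p : α × β =>
      h1 p.1 * h1 p.1 + (h2 p.2 * h2 p.2 + 2 * (h1 p.1 * h2 p.2))) (P.prod Q) := i11.add k3
  have k1 : Integrable (fun p : α × β =>
      f p * f p + (h1 p.1 * h1 p.1 + (h2 p.2 * h2 p.2 + 2 * (h1 p.1 * h2 p.2))))
      (P.prod Q) := iff'.add k2
  have kneg : Integrable (fun p : α × β =>
      2 * (f p * h1 p.1) + 2 * (f p * h2 p.2)) (P.prod Q) := j1.add j2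
  rw [integral_sub k1 kneg, integral_add iff' k2, integral_add i11 k3,
    integral_add i22 j12, integral_add j1 j2,
    integral_const_mul, integral_const_mul, integral_const_mul,
    e2, e3, e4, e5, e6] at hpos
  have hgoal : ∫ x, h1 x * h1 x ∂P + ∫ y, h2 y * h2 y ∂Q
      ≤ ∫ p, f p * f p ∂(P.prod Q) := by linarith
  exact hgoal

private lemma ustat_cov_shared {Ω : Type*} [MeasurableSpace Ω] (μ : Measure Ω)
    {P : Measure α} {Q : Measure β} [IsProbabilityMeasure P] [IsProbabilityMeasure Q]
    {f : α × β → ℝ} (hfm : Measurable f) (hf2 : MemLp f 2 (P.prod Q))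
    {u : Ω → α} {v w : Ω → β} (hum : Measurable u) (hvm : Measurable v) (hwm : Measurable w)
    (hlaw : μ.map (fun ω => (u ω, (v ω, w ω))) = P.prod (Q.prod Q)) :
    ∫ ω, f (u ω, v ω) * f (u ω, w ω) ∂μ = ∫ x, (∫ y, f (x, y) ∂Q) ^ 2 ∂P := by
  have hT : AEMeasurable (fun ω => (u ω, (v ω, w ω))) μ :=
    (hum.prodMk (hvm.prodMk hwm)).aemeasurable
  have hG1m : Measurable (fun q : α × β × β => f (q.1, q.2.1)) :=
    hfm.comp (measurable_fst.prodMk (measurable_fst.comp measurable_snd))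
  have hG2m : Measurable (fun q : α × β × β => f (q.1, q.2.2)) :=
    hfm.comp (measurable_fst.prodMk (measurable_snd.comp measurable_snd))
  have hGm : Measurable (fun q : α × β × β => f (q.1, q.2.1) * f (q.1, q.2.2)) := hG1m.mul hG2m
  have mpfstQ : MeasurePreserving (Prod.fst : β × β → β) (Q.prod Q) Q :=
    ⟨measurable_fst, by rw [Measure.map_fst_prod]; simp⟩
  have mpsndQ : MeasurePreserving (Prod.snd : β × β → β) (Q.prod Q) Q :=
    ⟨measurable_snd, by rw [Measure.map_snd_prod]; simp⟩
  have mp1 : MeasurePreserving (Prod.map (id : α → α) (Prod.fst : β × β → β))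
      (P.prod (Q.prod Q)) (P.prod Q) := (MeasurePreserving.id P).prod mpfstQ
  have mp2 : MeasurePreserving (Prod.map (id : α → α) (Prod.snd : β × β → β))
      (P.prod (Q.prod Q)) (P.prod Q) := (MeasurePreserving.id P).prod mpsndQ
  have hL1 : MemLp (fun q : α × β × β => f (q.1, q.2.1)) 2 (P.prod (Q.prod Q)) :=
    hf2.comp_measurePreserving mp1
  have hL2 : MemLp (fun q : α × β × β => f (q.1, q.2.2)) 2 (P.prod (Q.prod Q)) :=
    hf2.comp_measurePreserving mp2
  have hint3 : Integrable (fun q : α × β × β => f (q.1, q.2.1) * f (q.1, q.2.2))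
      (P.prod (Q.prod Q)) := ustat_l2mul hL1 hL2
  calc ∫ ω, f (u ω, v ω) * f (u ω, w ω) ∂μ
      = ∫ q : α × β × β, f (q.1, q.2.1) * f (q.1, q.2.2)
          ∂(μ.map (fun ω => (u ω, (v ω, w ω)))) :=
        (integral_map hT hGm.aestronglyMeasurable).symm
    _ = ∫ q : α × β × β, f (q.1, q.2.1) * f (q.1, q.2.2) ∂(P.prod (Q.prod Q)) := by
        rw [hlaw]
    _ = ∫ x, ∫ q : β × β, f (x, q.1) * f (x, q.2) ∂(Q.prod Q) ∂P := integral_prod _ hint3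
    _ = ∫ x, (∫ y, f (x, y) ∂Q) ^ 2 ∂P := by
        refine integral_congr_ae (Filter.Eventually.of_forall fun x => ?_)
        dsimp only
        rw [integral_prod_mul (fun y => f (x, y)) (fun y => f (x, y)), ← pow_two]

end AuxUStat

/-- The U-statistic estimator `U = k⁻² Σᵢ Σⱼ g(xᵢ, yⱼ)` and the paired estimator
`V = k⁻¹ Σᵢ g(xᵢ, yᵢ)` are both unbiased for `E[g(x, y)]` (with `x ∼ P`, `y ∼ Q`
independent), and `U` has variance at most that of `V`. -/
theorem ustat_unbiased_and_minvar
    {X : Type*} [MeasurableSpace X]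
    {Ω : Type*} [MeasurableSpace Ω] (μ : Measure Ω) [IsProbabilityMeasure μ]
    (P Q : Measure X) [IsProbabilityMeasure P] [IsProbabilityMeasure Q]
    (k : ℕ) (hk : 1 ≤ k)
    (x y : Fin k → Ω → X)
    (hxm : ∀ i, Measurable (x i)) (hym : ∀ j, Measurable (y j))
    (hx_law : ∀ i, μ.map (x i) = P) (hy_law : ∀ j, μ.map (y j) = Q)
    (hindep : iIndepFun (Sum.elim x y) μ)
    (g : X × X → ℝ) (hgm : Measurable g)
    (hg2 : MemLp g 2 (P.prod Q))
    (U V : Ω → ℝ)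
    (hU : U = fun ω => (1 / (k : ℝ)^2) * ∑ i : Fin k, ∑ j : Fin k, g (x i ω, y j ω))
    (hV : V = fun ω => (1 / (k : ℝ)) * ∑ i : Fin k, g (x i ω, y i ω)) :
    (∫ ω, U ω ∂μ = ∫ p, g p ∂(P.prod Q))
    ∧ (∫ ω, V ω ∂μ = ∫ p, g p ∂(P.prod Q))
    ∧ variance U μ ≤ variance V μ := by
  classical
  have hkpos : (0:ℝ) < (k : ℝ) := by exact_mod_cast Nat.lt_of_lt_of_le Nat.zero_lt_one hk
  have hk0 : (k:ℝ) ≠ 0 := ne_of_gt hkpos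
  have hk1 : (1:ℝ) ≤ (k:ℝ) := by exact_mod_cast hk
  set m : ℝ := ∫ p, g p ∂(P.prod Q) with hmdef
  -- measurability of the whole family
  have hFm : ∀ s : Fin k ⊕ Fin k, Measurable (Sum.elim x y s) := by
    rintro (i | j)
    · exact hxm i
    · exact hym j
  have hpm : ∀ i j, Measurable (fun ω => (x i ω, y j ω)) := fun i j =>
    (hxm i).prodMk (hym j)
  -- pair laws
  have hpair : ∀ i j, μ.map (fun ω => (x i ω, y j ω)) = P.prod Q := by
    intro i j
    have h : IndepFun (x i) (y j) μ :=
      hindep.indepFun (show (Sum.inl i : Fin k ⊕ Fin k) ≠ Sum.inr j by simp)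
    rw [(indepFun_iff_map_prod_eq_prod_map_map (hxm i).aemeasurable
      (hym j).aemeasurable).mp h, hx_law, hy_law]
  -- triple laws
  have htripleX : ∀ i j j', j ≠ j' →
      μ.map (fun ω => (x i ω, (y j ω, y j' ω))) = P.prod (Q.prod Q) := by
    intro i j j' hjj'
    have hyy : IndepFun (fun ω => (y j ω, y j' ω)) (x i) μ :=
      hindep.indepFun_prodMk hFm (Sum.inr j) (Sum.inr j') (Sum.inl i)
        (by simp) (by simp)
    have hyylaw : μ.map (fun ω => (y j ω, y j' ω)) = Q.prod Q := by
      have hjj : IndepFun (y j) (y j') μ :=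
        hindep.indepFun (show (Sum.inr j : Fin k ⊕ Fin k) ≠ Sum.inr j' by simpa using hjj')
      rw [(indepFun_iff_map_prod_eq_prod_map_map (hym j).aemeasurable
        (hym j').aemeasurable).mp hjj, hy_law, hy_law]
    rw [(indepFun_iff_map_prod_eq_prod_map_map (hxm i).aemeasurable
      ((hym j).prodMk (hym j')).aemeasurable).mp hyy.symm, hx_law, hyylaw]
  have htripleY : ∀ j i i', i ≠ i' →
      μ.map (fun ω => (y j ω, (x i ω, x i' ω))) = Q.prod (P.prod P) := by
    intro j i i' hii'
    have hxx : IndepFun (fun ω => (x i ω, x i' ω)) (y j) μ :=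
      hindep.indepFun_prodMk hFm (Sum.inl i) (Sum.inl i') (Sum.inr j)
        (by simp) (by simp)
    have hxxlaw : μ.map (fun ω => (x i ω, x i' ω)) = P.prod P := by
      have hii : IndepFun (x i) (x i') μ :=
        hindep.indepFun (show (Sum.inl i : Fin k ⊕ Fin k) ≠ Sum.inl i' by simpa using hii')
      rw [(indepFun_iff_map_prod_eq_prod_map_map (hxm i).aemeasurable
        (hxm i').aemeasurable).mp hii, hx_law, hx_law]
    rw [(indepFun_iff_map_prod_eq_prod_map_map (hym j).aemeasurable
      ((hxm i).prodMk (hxm i')).aemeasurable).mp hxx.symm, hy_law, hxxlaw]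
  -- the centered kernel
  set gt : X × X → ℝ := fun p => g p - m with hgtdef
  have hgtm : Measurable gt := hgm.sub measurable_const
  have hgt2 : MemLp gt 2 (P.prod Q) := hg2.sub (memLp_const m)
  have hgint : Integrable g (P.prod Q) := hg2.integrable one_le_two
  have hgt0 : ∫ p, gt p ∂(P.prod Q) = 0 := by
    rw [hgtdef]
    rw [integral_sub hgint (integrable_const m), integral_const]
    simp [hmdef]
  -- membership and moments for composed variables
  have hWmem : ∀ i j, MemLp (fun ω => g (x i ω, y j ω)) 2 μ := by
    intro i j
    have h := hg2
    rw [← hpair i j] at h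
    exact (memLp_map_measure_iff hgm.aestronglyMeasurable (hpm i j).aemeasurable).mp h
  have hZmem : ∀ i j, MemLp (fun ω => gt (x i ω, y j ω)) 2 μ := by
    intro i j
    have h := hgt2
    rw [← hpair i j] at h
    exact (memLp_map_measure_iff hgtm.aestronglyMeasurable (hpm i j).aemeasurable).mp h
  have hGint : ∀ i j, Integrable (fun ω => g (x i ω, y j ω)) μ := fun i j =>
    (hWmem i j).integrable one_le_two
  have hEg : ∀ i j, ∫ ω, g (x i ω, y j ω) ∂μ = m := by
    intro i j
    have h := integral_map (f := g) (μ := μ) (hpm i j).aemeasurable hgm.aestronglyMeasurable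
    rw [hpair i j] at h
    exact h.symm
  have hEZ : ∀ i j, ∫ ω, gt (x i ω, y j ω) ∂μ = 0 := by
    intro i j
    have h := integral_map (f := gt) (μ := μ) (hpm i j).aemeasurable hgtm.aestronglyMeasurable
    rw [hpair i j] at h
    rw [← h, hgt0]
  -- the three covariance values
  set A : ℝ := ∫ p, gt p ^ 2 ∂(P.prod Q) with hAdef
  set B : ℝ := ∫ x', (∫ y', gt (x', y') ∂Q) ^ 2 ∂P with hBdef
  set C : ℝ := ∫ y', (∫ x', gt (x', y') ∂P) ^ 2 ∂Q with hCdef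
  have hcov : ∀ i j i' j', ∫ ω, gt (x i ω, y j ω) * gt (x i' ω, y j' ω) ∂μ
      = if i = i' then (if j = j' then A else B) else (if j = j' then C else 0) := by
    intro i j i' j'
    by_cases hii : i = i'
    · subst hii
      by_cases hjj : j = j'
      · subst hjj
        simp only [if_true]
        have h := integral_map (f := fun p => gt p * gt p) (μ := μ) (hpm i j).aemeasurable
          ((hgtm.mul hgtm).aestronglyMeasurable)
        rw [hpair i j] at h
        rw [← h, hAdef]
        simp_rw [pow_two]
      · simp only [hjj, if_false, if_true]
        rw [hBdef]
        exact ustat_cov_shared μ hgtm hgt2 (hxm i) (hym j) (hym j') (htripleX i j j' hjj)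
    · by_cases hjj : j = j'
      · subst hjj
        simp only [hii, if_false, if_true]
        have hswapm : Measurable (gt ∘ Prod.swap : X × X → ℝ) := hgtm.comp measurable_swap
        have hswap2 : MemLp (gt ∘ Prod.swap) 2 (Q.prod P) :=
          hgt2.comp_measurePreserving Measure.measurePreserving_swap
        have h := ustat_cov_shared μ hswapm hswap2 (hym j) (hxm i) (hxm i')
          (htripleY j i i' hii)
        rw [hCdef]
        simpa [Function.comp] using h
      · simp only [hii, hjj, if_false]
        have hpairind : IndepFun (fun ω => (x i ω, y j ω)) (fun ω => (x i' ω, y j' ω)) μ :=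
          hindep.indepFun_prodMk_prodMk hFm (Sum.inl i) (Sum.inr j) (Sum.inl i')
            (Sum.inr j') (by simp [hii]) (by simp) (by simp) (by simp [hjj])
        have hz : IndepFun (fun ω => gt (x i ω, y j ω)) (fun ω => gt (x i' ω, y j' ω)) μ :=
          hpairind.comp hgtm hgtm
        have h := hz.integral_mul_eq_mul_integral ((hgtm.comp (hpm i j)).aestronglyMeasurable)
          ((hgtm.comp (hpm i' j')).aestronglyMeasurable)
        have h' : ∫ ω, gt (x i ω, y j ω) * gt (x i' ω, y j' ω) ∂μ
            = (∫ ω, gt (x i ω, y j ω) ∂μ) * ∫ ω, gt (x i' ω, y j' ω) ∂μ := h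
        rw [h', hEZ i j, hEZ i' j', mul_zero]
  -- unbiasedness of U
  have hEU : ∫ ω, U ω ∂μ = m := by
    have hinner : ∀ i : Fin k, ∫ ω, (∑ j : Fin k, g (x i ω, y j ω)) ∂μ
        = ∑ _j : Fin k, m := by
      intro i
      rw [integral_finset_sum _ (fun j _ => hGint i j)]
      exact Finset.sum_congr rfl fun j _ => hEg i j
    simp only [hU]
    rw [integral_const_mul,
      integral_finset_sum _ (fun i _ => integrable_finset_sum _ (fun j _ => hGint i j))]
    simp only [hinner, Finset.sum_const, Finset.card_univ, Fintype.card_fin, nsmul_eq_mul]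
    field_simp <;> ring
  have hEV : ∫ ω, V ω ∂μ = m := by
    simp only [hV]
    rw [integral_const_mul, integral_finset_sum _ (fun i _ => hGint i i)]
    simp only [hEg, Finset.sum_const, Finset.card_univ, Fintype.card_fin, nsmul_eq_mul]
    field_simp
  -- MemLp of U and V
  have hUsum : MemLp (fun ω => ∑ i : Fin k, ∑ j : Fin k, g (x i ω, y j ω)) 2 μ := by
    refine memLp_finset_sum _ fun i _ => ?_
    refine memLp_finset_sum _ fun j _ => ?_
    exact hWmem i j
  have hVsum : MemLp (fun ω => ∑ i : Fin k, g (x i ω, y i ω)) 2 μ := by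
    refine memLp_finset_sum _ fun i _ => ?_
    exact hWmem i i
  have hUmem : MemLp U 2 μ := by
    rw [hU]
    exact hUsum.const_mul _
  have hVmem : MemLp V 2 μ := by
    rw [hV]
    exact hVsum.const_mul _
  -- variance of V
  have hVptw : ∀ ω, V ω - m = (1 / (k:ℝ)) * ∑ i : Fin k, gt (x i ω, y i ω) := by
    intro ω
    rw [hV, hgtdef]
    simp only [Finset.sum_sub_distrib, Finset.sum_const, Finset.card_univ, Fintype.card_fin,
      nsmul_eq_mul]
    field_simp <;> ring
  have hvarV : variance V μ = (1 / (k:ℝ))^2 * ((k:ℝ) * A) := by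
    have h1 : variance V μ = ∫ ω, (V ω - m)^2 ∂μ := by
      rw [variance_eq_integral hVmem.aemeasurable, hEV]
    rw [h1]
    calc ∫ ω, (V ω - m)^2 ∂μ
        = ∫ ω, ((1 / (k:ℝ)) * ∑ i : Fin k, gt (x i ω, y i ω))^2 ∂μ :=
          integral_congr_ae (Filter.Eventually.of_forall fun ω => by dsimp only; rw [hVptw ω])
      _ = (1 / (k:ℝ))^2 * ∫ ω, (∑ i : Fin k, gt (x i ω, y i ω))^2 ∂μ := by
          simp_rw [mul_pow]
          rw [integral_const_mul]
      _ = (1 / (k:ℝ))^2 * ∑ i : Fin k, ∑ i' : Fin k,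
            ∫ ω, gt (x i ω, y i ω) * gt (x i' ω, y i' ω) ∂μ := by
          congr 1
          have hptw : ∀ ω : Ω, (∑ i : Fin k, gt (x i ω, y i ω))^2
              = ∑ i : Fin k, ∑ i' : Fin k, gt (x i ω, y i ω) * gt (x i' ω, y i' ω) := by
            intro ω
            rw [pow_two, Finset.sum_mul_sum]
          rw [integral_congr_ae (Filter.Eventually.of_forall fun ω => hptw ω),
            integral_finset_sum _ (fun i _ => integrable_finset_sum _
              (fun i' _ => ustat_l2mul (hZmem i i) (hZmem i' i')))]
          exact Finset.sum_congr rfl fun i _ =>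
            integral_finset_sum _ (fun i' _ => ustat_l2mul (hZmem i i) (hZmem i' i'))
      _ = (1 / (k:ℝ))^2 * ((k:ℝ) * A) := by
          congr 1
          have hval : ∀ i i' : Fin k,
              ∫ ω, gt (x i ω, y i ω) * gt (x i' ω, y i' ω) ∂μ
              = if i = i' then A else 0 := by
            intro i i'
            rw [hcov i i i' i']
            by_cases h : i = i' <;> simp [h]
          simp only [hval]
          exact ustat_sum2 k A
  -- variance of U
  have hUptw : ∀ ω, U ω - m
      = (1 / (k:ℝ)^2) * ∑ i : Fin k, ∑ j : Fin k, gt (x i ω, y j ω) := by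
    intro ω
    rw [hU, hgtdef]
    simp only [Finset.sum_sub_distrib, Finset.sum_const, Finset.card_univ, Fintype.card_fin,
      nsmul_eq_mul]
    field_simp <;> ring
  have hvarU : variance U μ = (1 / (k:ℝ)^2)^2 * ((k:ℝ) * k * A
      + (k:ℝ) * k * ((k:ℝ) - 1) * B + (k:ℝ) * k * ((k:ℝ) - 1) * C) := by
    have h1 : variance U μ = ∫ ω, (U ω - m)^2 ∂μ := by
      rw [variance_eq_integral hUmem.aemeasurable, hEU]
    rw [h1]
    calc ∫ ω, (U ω - m)^2 ∂μ
        = ∫ ω, ((1 / (k:ℝ)^2) * ∑ i : Fin k, ∑ j : Fin k, gt (x i ω, y j ω))^2 ∂μ :=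
          integral_congr_ae (Filter.Eventually.of_forall fun ω => by dsimp only; rw [hUptw ω])
      _ = (1 / (k:ℝ)^2)^2 * ∫ ω, (∑ i : Fin k, ∑ j : Fin k, gt (x i ω, y j ω))^2 ∂μ := by
          simp_rw [mul_pow]
          rw [integral_const_mul]
      _ = (1 / (k:ℝ)^2)^2 * ∑ p : Fin k × Fin k, ∑ q : Fin k × Fin k,
            ∫ ω, gt (x p.1 ω, y p.2 ω) * gt (x q.1 ω, y q.2 ω) ∂μ := by
          congr 1
          have hptw : ∀ ω : Ω, (∑ i : Fin k, ∑ j : Fin k, gt (x i ω, y j ω))^2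
              = ∑ p : Fin k × Fin k, ∑ q : Fin k × Fin k,
                  gt (x p.1 ω, y p.2 ω) * gt (x q.1 ω, y q.2 ω) := by
            intro ω
            rw [show (∑ i : Fin k, ∑ j : Fin k, gt (x i ω, y j ω))
                = ∑ p : Fin k × Fin k, gt (x p.1 ω, y p.2 ω) from
                (Fintype.sum_prod_type (f := fun p : Fin k × Fin k =>
                  gt (x p.1 ω, y p.2 ω))).symm,
              pow_two, Finset.sum_mul_sum]
          rw [integral_congr_ae (Filter.Eventually.of_forall fun ω => hptw ω),
            integral_finset_sum _ (fun p _ => integrable_finset_sum _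
              (fun q _ => ustat_l2mul (hZmem p.1 p.2) (hZmem q.1 q.2)))]
          exact Finset.sum_congr rfl fun p _ =>
            integral_finset_sum _ (fun q _ => ustat_l2mul (hZmem p.1 p.2) (hZmem q.1 q.2))
      _ = (1 / (k:ℝ)^2)^2 * ((k:ℝ) * k * A
            + (k:ℝ) * k * ((k:ℝ) - 1) * B + (k:ℝ) * k * ((k:ℝ) - 1) * C) := by
          congr 1
          simp only [hcov]
          simp_rw [Fintype.sum_prod_type]
          exact ustat_sum4 k A B C
  -- key inequality
  have hkey : B + C ≤ A := by
    rw [hAdef, hBdef, hCdef]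
    exact ustat_key_ineq hgtm hgt2 hgt0
  refine ⟨hEU, hEV, ?_⟩
  rw [hvarU, hvarV]
  have h3 : ((k:ℝ) - 1) * (B + C) ≤ ((k:ℝ) - 1) * A :=
    mul_le_mul_of_nonneg_left hkey (by linarith)
  have e1 : (1 / (k:ℝ)^2)^2 * ((k:ℝ) * k * A + (k:ℝ) * k * ((k:ℝ) - 1) * B
      + (k:ℝ) * k * ((k:ℝ) - 1) * C) = (A + ((k:ℝ) - 1) * (B + C)) / (k:ℝ)^2 := by
    field_simp <;> ring
  have e2 : (1 / (k:ℝ))^2 * ((k:ℝ) * A) = ((k:ℝ) * A) / (k:ℝ)^2 := by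
    field_simp <;> ring
  rw [e1, e2]
  have hq : A + ((k:ℝ) - 1) * (B + C) ≤ (k:ℝ) * A := by
    have : A + ((k:ℝ) - 1) * A = (k:ℝ) * A := by ring
    linarith
  have hc : (0:ℝ) < (k:ℝ)^2 := by positivity
  gcongr
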